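/- The Schur complement of a block diagonally dominant matrix with respect to a single index (with invertible diagonal block) is again block diagonally dominant. -/

import Mathlib

open Matrix Finset
open scoped ComplexOrder

set_option maxHeartbeats 1000000
set_option synthInstance.maxHeartbeats 400000

/-- The `ℓ²` operator norm of a square complex matrix. -/
noncomputable def matOpNorm {r : ℕ} (A : Matrix (Fin r) (Fin r) ℂ) : ℝ :=
  ‖(Matrix.toEuclideanCLM (𝕜 := ℂ) A : EuclideanSpace ℂ (Fin r) →L[ℂ] EuclideanSpace ℂ (Fin r))‖

/-- A Hermitian block matrix (given by its `r × r` blocks) is block diagonally dominant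
if for every `i`, `M i i ⪰ (∑_{j ≠ i} ‖M i j‖) · I`. -/
def IsBDD {n r : ℕ} (M : Fin n → Fin n → Matrix (Fin r) (Fin r) ℂ) : Prop :=
  ∀ i, (M i i - (∑ j ∈ Finset.univ.erase i, matOpNorm (M i j)) •
      (1 : Matrix (Fin r) (Fin r) ℂ)).PosSemidef

/-- Flatten a block matrix into an ordinary matrix. -/
def flatten {n r : ℕ} (M : Fin n → Fin n → Matrix (Fin r) (Fin r) ℂ) :
    Matrix (Fin n × Fin r) (Fin n × Fin r) ℂ :=
  Matrix.of fun p q => M p.1 q.1 p.2 q.2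

section Aux

variable {r : ℕ}

lemma sa_matOpNorm_eq (A : Matrix (Fin r) (Fin r) ℂ) :
    matOpNorm A = ‖Matrix.toEuclideanCLM (𝕜 := ℂ) A‖ := rfl

lemma sa_map_real_smul (c : ℝ) (X : Matrix (Fin r) (Fin r) ℂ) :
    Matrix.toEuclideanCLM (𝕜 := ℂ) (c • X) = c • Matrix.toEuclideanCLM (𝕜 := ℂ) X := by
  rw [← algebraMap_smul ℂ c X, _root_.map_smul, Algebra.algebraMap_eq_smul_one, smul_assoc,
    one_smul]

open scoped MatrixOrder in
lemma sa_posSemidef_iff_eq_conjTranspose_mul_self {A : Matrix (Fin r) (Fin r) ℂ} :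
    A.PosSemidef ↔ ∃ B : Matrix (Fin r) (Fin r) ℂ, A = Bᴴ * B := by
  constructor
  · intro hA
    obtain ⟨X, hX, -, rfl⟩ := CFC.exists_sqrt_of_isSelfAdjoint_of_quasispectrumRestricts
      hA.isHermitian (QuasispectrumRestricts.nnreal_of_nonneg hA.nonneg)
    exact ⟨X, by rw [← Matrix.star_eq_conjTranspose, hX.star_eq]⟩
  · rintro ⟨B, rfl⟩
    exact posSemidef_conjTranspose_mul_self B

lemma sa_psd_iff (X : Matrix (Fin r) (Fin r) ℂ) :
    X.PosSemidef ↔ 0 ≤ Matrix.toEuclideanCLM (𝕜 := ℂ) X := by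
  constructor
  · intro h
    obtain ⟨B, rfl⟩ := sa_posSemidef_iff_eq_conjTranspose_mul_self.mp h
    rw [_root_.map_mul]
    have hB : Matrix.toEuclideanCLM (𝕜 := ℂ) Bᴴ = star (Matrix.toEuclideanCLM (𝕜 := ℂ) B) := by
      rw [← map_star, Matrix.star_eq_conjTranspose]
    rw [hB]
    exact star_mul_self_nonneg _
  · intro h
    rw [StarOrderedRing.nonneg_iff] at h
    have key : ∀ a ∈ AddSubmonoid.closure
        (Set.range fun s : EuclideanSpace ℂ (Fin r) →L[ℂ] EuclideanSpace ℂ (Fin r) =>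
          star s * s),
        Matrix.PosSemidef ((Matrix.toEuclideanCLM (𝕜 := ℂ) (n := Fin r)).symm a) := by
      intro a ha
      induction ha using AddSubmonoid.closure_induction with
      | mem x hx =>
        obtain ⟨y, rfl⟩ := hx
        refine sa_posSemidef_iff_eq_conjTranspose_mul_self.mpr
          ⟨(Matrix.toEuclideanCLM (𝕜 := ℂ) (n := Fin r)).symm y, ?_⟩
        rw [_root_.map_mul, map_star, Matrix.star_eq_conjTranspose]
      | zero => simpa using Matrix.PosSemidef.zero
      | add a b _ _ hpa hpb => simpa [map_add] using hpa.add hpb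
    have h2 := key _ h
    rwa [StarAlgEquiv.symm_apply_apply] at h2

lemma sa_algebraMap_nonneg {A : Type*} [CStarAlgebra A] [PartialOrder A] [StarOrderedRing A]
    {c : ℝ} (hc : 0 ≤ c) : 0 ≤ algebraMap ℝ A c := by
  have hstar : ∀ y : ℝ, star (algebraMap ℝ A y) = algebraMap ℝ A y := fun y => by
    rw [Algebra.algebraMap_eq_smul_one, star_smul, star_trivial, star_one]
  have h : algebraMap ℝ A c
      = star (algebraMap ℝ A (Real.sqrt c)) * algebraMap ℝ A (Real.sqrt c) := by
    rw [hstar, ← _root_.map_mul, Real.mul_self_sqrt hc]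
  rw [h]
  exact star_mul_self_nonneg _

lemma sa_algebraMap_mono {A : Type*} [CStarAlgebra A] [PartialOrder A] [StarOrderedRing A]
    {c d : ℝ} (h : c ≤ d) : algebraMap ℝ A c ≤ algebraMap ℝ A d := by
  rw [← sub_nonneg, ← map_sub]
  exact sa_algebraMap_nonneg (sub_nonneg.2 h)

lemma sa_sum_zero {n : ℕ} (f : Fin (n + 1) → ℝ) :
    ∑ k ∈ Finset.univ.erase 0, f k = ∑ j : Fin n, f j.succ := by
  rw [Finset.sum_erase_eq_sub (Finset.mem_univ 0), Fin.sum_univ_succ]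
  ring

lemma sa_sum_succ {n : ℕ} (f : Fin (n + 1) → ℝ) (i : Fin n) :
    ∑ k ∈ Finset.univ.erase i.succ, f k = f 0 + ∑ j ∈ Finset.univ.erase i, f j.succ := by
  rw [Finset.sum_erase_eq_sub (Finset.mem_univ i.succ), Fin.sum_univ_succ,
    Finset.sum_erase_eq_sub (Finset.mem_univ i)]
  ring

end Aux

/-- The Schur complement of a Hermitian bDD block matrix with respect to a single index
(whose diagonal block is invertible) is again bDD. -/
theorem stmt_9 {n r : ℕ} (M : Fin (n + 1) → Fin (n + 1) → Matrix (Fin r) (Fin r) ℂ)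
    (hHerm : ∀ i j, (M i j)ᴴ = M j i) (hbdd : IsBDD M)
    (hinv : IsUnit (M 0 0)) :
    IsBDD (fun i j : Fin n => M i.succ j.succ - M i.succ 0 * (M 0 0)⁻¹ * M 0 j.succ) := by
  classical
  intro i
  show (M i.succ i.succ - M i.succ 0 * (M 0 0)⁻¹ * M 0 i.succ -
      (∑ j ∈ Finset.univ.erase i, matOpNorm
        (M i.succ j.succ - M i.succ 0 * (M 0 0)⁻¹ * M 0 j.succ)) •
      (1 : Matrix (Fin r) (Fin r) ℂ)).PosSemidef
  set ψ := Matrix.toEuclideanCLM (𝕜 := ℂ) (n := Fin r) with hψ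
  set d := ψ (M 0 0) with hd_def
  have hdu : IsUnit d := hinv.map ψ
  set u := hdu.unit with hu_def
  have hu : (↑u : EuclideanSpace ℂ (Fin r) →L[ℂ] EuclideanSpace ℂ (Fin r)) = d := hdu.unit_spec
  set e := (↑u⁻¹ : EuclideanSpace ℂ (Fin r) →L[ℂ] EuclideanSpace ℂ (Fin r)) with he_def
  -- ψ of the inverse matrix
  have hMinv : ψ ((M 0 0)⁻¹) = e := by
    have h1 : M 0 0 * (M 0 0)⁻¹ = 1 :=
      Matrix.mul_nonsing_inv _ ((Matrix.isUnit_iff_isUnit_det _).mp hinv)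
    have h2 : (↑u : EuclideanSpace ℂ (Fin r) →L[ℂ] EuclideanSpace ℂ (Fin r))
        * ψ ((M 0 0)⁻¹) = 1 := by
      rw [hu, hd_def, ← _root_.map_mul, h1, _root_.map_one]
    exact (Units.inv_eq_of_mul_eq_one_right h2).symm
  -- star facts
  have hds : star d = d := by
    rw [hd_def, ← map_star, Matrix.star_eq_conjTranspose, hHerm 0 0]
  have hes : star e = e := by
    have h2 : (↑u : EuclideanSpace ℂ (Fin r) →L[ℂ] EuclideanSpace ℂ (Fin r)) * star e = 1 := by
      have h3 := congrArg star u.inv_mul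
      rw [StarMul.star_mul, star_one, hu, hds] at h3
      rw [hu]
      exact h3
    exact (Units.inv_eq_of_mul_eq_one_right h2).symm
  set b := fun j : Fin n => ψ (M j.succ 0) with hb_def
  have hbstar : ∀ j, ψ (M 0 j.succ) = star (b j) := fun j => by
    rw [hb_def, ← map_star, Matrix.star_eq_conjTranspose, hHerm j.succ 0]
  have hg : ∀ j, ψ (M i.succ j.succ - M i.succ 0 * (M 0 0)⁻¹ * M 0 j.succ)
      = ψ (M i.succ j.succ) - b i * e * star (b j) := fun j => by
    rw [map_sub, _root_.map_mul, _root_.map_mul, hMinv, hbstar, hb_def]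
  -- norms
  set σ : Fin n → ℝ := fun j => ‖star (b j)‖ with hσ_def
  have hnorm_star : ∀ j, matOpNorm (M 0 j.succ) = σ j := fun j => by
    rw [sa_matOpNorm_eq, ← hψ, hbstar j, hσ_def]
  set s : ℝ := ∑ j : Fin n, σ j with hs_def
  have hs0 : 0 ≤ s := Finset.sum_nonneg fun j _ => norm_nonneg _
  -- Step A : algebraMap ℝ _ s ≤ d
  have stepA : algebraMap ℝ _ s ≤ d := by
    have hA0 := (sa_psd_iff _).mp (hbdd 0)
    rw [map_sub, sa_map_real_smul, _root_.map_one, ← Algebra.algebraMap_eq_smul_one, ← hψ,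
      ← hd_def] at hA0
    have hsum : (∑ k ∈ Finset.univ.erase (0 : Fin (n+1)), matOpNorm (M 0 k)) = s := by
      rw [sa_sum_zero fun k => matOpNorm (M 0 k), hs_def]
      exact Finset.sum_congr rfl fun j _ => hnorm_star j
    rw [hsum] at hA0
    exact sub_nonneg.mp hA0
  have hd0 : (0 : EuclideanSpace ℂ (Fin r) →L[ℂ] EuclideanSpace ℂ (Fin r)) ≤ d :=
    le_trans (sa_algebraMap_nonneg hs0) stepA
  have he0 : (0 : EuclideanSpace ℂ (Fin r) →L[ℂ] EuclideanSpace ℂ (Fin r)) ≤ e :=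
    CFC.inv_nonneg_of_nonneg u (hu ▸ hd0)
  -- Step B : ‖e‖ * s ≤ 1
  have stepB : ‖e‖ * s ≤ 1 := by
    rcases eq_or_lt_of_le hs0 with h0 | hs
    · rw [← h0, mul_zero]; exact zero_le_one
    · have hsu : IsUnit (algebraMap ℝ
          (EuclideanSpace ℂ (Fin r) →L[ℂ] EuclideanSpace ℂ (Fin r)) s) :=
        (isUnit_iff_ne_zero.mpr hs.ne').map (algebraMap ℝ _)
      set v := hsu.unit with hv_def
      have hv : (↑v : EuclideanSpace ℂ (Fin r) →L[ℂ] EuclideanSpace ℂ (Fin r))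
          = algebraMap ℝ _ s := hsu.unit_spec
      have hvinv : (↑v⁻¹ : EuclideanSpace ℂ (Fin r) →L[ℂ] EuclideanSpace ℂ (Fin r))
          = algebraMap ℝ _ s⁻¹ := by
        apply Units.inv_eq_of_mul_eq_one_right
        rw [hv, ← _root_.map_mul, mul_inv_cancel₀ hs.ne', _root_.map_one]
      have hle : (↑u⁻¹ : EuclideanSpace ℂ (Fin r) →L[ℂ] EuclideanSpace ℂ (Fin r)) ≤ ↑v⁻¹ :=
        CStarAlgebra.inv_le_inv (a := v) (b := u)
          (hv ▸ sa_algebraMap_nonneg hs0) (by rw [hv, hu]; exact stepA)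
      have hnorme : ‖e‖ ≤ s⁻¹ := by
        rw [CStarAlgebra.norm_le_iff_le_algebraMap e (inv_nonneg.mpr hs0) he0]
        rw [he_def, ← hvinv]
        exact hle
      calc ‖e‖ * s ≤ s⁻¹ * s := mul_le_mul_of_nonneg_right hnorme hs0
        _ = 1 := inv_mul_cancel₀ hs.ne'
  -- Step C : bDD at i.succ
  set T : ℝ := ∑ j ∈ Finset.univ.erase i, matOpNorm (M i.succ j.succ) with hT_def
  have hbi : matOpNorm (M i.succ 0) = ‖b i‖ := by
    rw [sa_matOpNorm_eq, ← hψ, hb_def]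
  have stepC : algebraMap ℝ _ (T + ‖b i‖) ≤ ψ (M i.succ i.succ) := by
    have hA1 := (sa_psd_iff _).mp (hbdd i.succ)
    rw [map_sub, sa_map_real_smul, _root_.map_one, ← Algebra.algebraMap_eq_smul_one,
      ← hψ] at hA1
    have hsum : (∑ k ∈ Finset.univ.erase i.succ, matOpNorm (M i.succ k)) = T + ‖b i‖ := by
      rw [sa_sum_succ (fun k => matOpNorm (M i.succ k)) i, hbi, ← hT_def, add_comm]
    rw [hsum] at hA1
    exact sub_nonneg.mp hA1
  -- the conjugated term bound
  have hx_sa : _root_.IsSelfAdjoint (b i * e * star (b i)) := by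
    show star _ = _
    simp only [StarMul.star_mul, star_star, hes, mul_assoc]
  have hx_norm : ‖b i * e * star (b i)‖ ≤ ‖b i‖ * ‖e‖ * σ i := by
    calc ‖b i * e * star (b i)‖ ≤ ‖b i * e‖ * ‖star (b i)‖ := norm_mul_le _ _
      _ ≤ ‖b i‖ * ‖e‖ * ‖star (b i)‖ :=
          mul_le_mul_of_nonneg_right (norm_mul_le _ _) (norm_nonneg _)
      _ = ‖b i‖ * ‖e‖ * σ i := by rw [hσ_def]
  have stepD : b i * e * star (b i) ≤ algebraMap ℝ _ (‖b i‖ * ‖e‖ * σ i) :=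
    le_trans hx_sa.le_algebraMap_norm_self (sa_algebraMap_mono hx_norm)
  -- the key real inequality
  set t : ℝ := ∑ j ∈ Finset.univ.erase i,
      matOpNorm (M i.succ j.succ - M i.succ 0 * (M 0 0)⁻¹ * M 0 j.succ) with ht_def
  have hkey : t ≤ T + ‖b i‖ - ‖b i‖ * ‖e‖ * σ i := by
    have hterm : ∀ j ∈ Finset.univ.erase i,
        matOpNorm (M i.succ j.succ - M i.succ 0 * (M 0 0)⁻¹ * M 0 j.succ)
          ≤ matOpNorm (M i.succ j.succ) + ‖b i‖ * ‖e‖ * σ j := by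
      intro j _
      rw [sa_matOpNorm_eq, ← hψ, hg j]
      calc ‖ψ (M i.succ j.succ) - b i * e * star (b j)‖
          ≤ ‖ψ (M i.succ j.succ)‖ + ‖b i * e * star (b j)‖ := norm_sub_le _ _
        _ ≤ matOpNorm (M i.succ j.succ) + ‖b i‖ * ‖e‖ * σ j := by
            rw [sa_matOpNorm_eq, ← hψ]
            refine add_le_add le_rfl ?_
            calc ‖b i * e * star (b j)‖ ≤ ‖b i * e‖ * ‖star (b j)‖ := norm_mul_le _ _
              _ ≤ ‖b i‖ * ‖e‖ * ‖star (b j)‖ :=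
                  mul_le_mul_of_nonneg_right (norm_mul_le _ _) (norm_nonneg _)
              _ = ‖b i‖ * ‖e‖ * σ j := by rw [hσ_def]
    have h1 : t ≤ T + ‖b i‖ * ‖e‖ * (s - σ i) := by
      calc t ≤ ∑ j ∈ Finset.univ.erase i,
            (matOpNorm (M i.succ j.succ) + ‖b i‖ * ‖e‖ * σ j) := Finset.sum_le_sum hterm
        _ = T + ‖b i‖ * ‖e‖ * ∑ j ∈ Finset.univ.erase i, σ j := by
            rw [Finset.sum_add_distrib, ← Finset.mul_sum, ← hT_def]
        _ = T + ‖b i‖ * ‖e‖ * (s - σ i) := by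
            rw [Finset.sum_erase_eq_sub (Finset.mem_univ i), ← hs_def]
    nlinarith [norm_nonneg (b i), norm_nonneg e, stepB,
      mul_le_mul_of_nonneg_left stepB (norm_nonneg (b i))]
  -- assemble
  rw [sa_psd_iff, map_sub, sa_map_real_smul, _root_.map_one, ← Algebra.algebraMap_eq_smul_one,
    ← hψ, sub_nonneg, hg i]
  calc algebraMap ℝ _ t ≤ algebraMap ℝ _ ((T + ‖b i‖) - ‖b i‖ * ‖e‖ * σ i) :=
        sa_algebraMap_mono hkey
    _ = algebraMap ℝ _ (T + ‖b i‖) - algebraMap ℝ _ (‖b i‖ * ‖e‖ * σ i) := map_sub _ _ _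
    _ ≤ ψ (M i.succ i.succ) - b i * e * star (b i) := sub_le_sub stepC stepD
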